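/- Let a > 0 and b ∈ (0,1), let F be the EOS map F(x) = x + b − 1/(e^{−ax} + 1), let f_MW : (0,1) → (0,1) be given by f_MW(y) = y/(y + (1−y)·exp(a(y−b))), and let h : (0,1) → ℝ be given by h(y) = (1/a)·log(y/(1−y)). Then f_MW maps (0,1) into (0,1), h is a bijection from (0,1) onto ℝ, and F(h(y)) = h(f_MW(y)) for every y ∈ (0,1); that is, F is conjugate to f_MW via h. -/

import Mathlib

theorem eos_conjugate_to_mw (a b : ℝ) (ha : 0 < a) (hb : b ∈ Set.Ioo (0:ℝ) 1)
    (F : ℝ → ℝ) (hF : ∀ x, F x = x + b - 1 / (Real.exp (-a * x) + 1))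
    (fMW : ℝ → ℝ)
    (hfMW : ∀ y, fMW y = y / (y + (1 - y) * Real.exp (a * (y - b))))
    (h : ℝ → ℝ) (hh : ∀ y, h y = (1 / a) * Real.log (y / (1 - y))) :
    Set.MapsTo fMW (Set.Ioo (0:ℝ) 1) (Set.Ioo (0:ℝ) 1) ∧
    Set.BijOn h (Set.Ioo (0:ℝ) 1) Set.univ ∧
    ∀ y ∈ Set.Ioo (0:ℝ) 1, F (h y) = h (fMW y) := by
  have ha' : a ≠ 0 := ne_of_gt ha
  -- key: exp(a * h y) = y/(1-y) for y ∈ (0,1)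
  have key : ∀ y ∈ Set.Ioo (0:ℝ) 1, Real.exp (a * h y) = y / (1 - y) := by
    intro y hy
    have hpos : 0 < y / (1 - y) := div_pos hy.1 (by linarith [hy.2])
    rw [hh, show a * (1 / a * Real.log (y / (1 - y))) = Real.log (y / (1 - y)) by
      field_simp]
    exact Real.exp_log hpos
  have hmaps : Set.MapsTo fMW (Set.Ioo (0:ℝ) 1) (Set.Ioo (0:ℝ) 1) := by
    intro y hy
    obtain ⟨hy0, hy1⟩ := hy
    have hD : 0 < y + (1 - y) * Real.exp (a * (y - b)) := by
      have := Real.exp_pos (a * (y - b))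
      nlinarith
    rw [hfMW]
    constructor
    · exact div_pos hy0 hD
    · rw [div_lt_one hD]
      nlinarith [Real.exp_pos (a * (y - b))]
  refine ⟨hmaps, ⟨fun _ _ => trivial, ?_, ?_⟩, ?_⟩
  · -- InjOn
    intro y1 h1 y2 h2 heq
    have e1 := key y1 h1
    have e2 := key y2 h2
    rw [heq, e2] at e1
    have h11 : (1:ℝ) - y1 ≠ 0 := by linarith [h1.2]
    have h21 : (1:ℝ) - y2 ≠ 0 := by linarith [h2.2]
    field_simp at e1
    nlinarith [e1]
  · -- SurjOn
    intro t _
    set y := 1 / (1 + Real.exp (-a * t)) with hy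
    have hexp := Real.exp_pos (-a * t)
    have hden : 0 < 1 + Real.exp (-a * t) := by linarith
    have hy0 : 0 < y := by positivity
    have hy1 : y < 1 := by
      rw [hy, div_lt_one hden]; linarith
    refine ⟨y, ⟨hy0, hy1⟩, ?_⟩
    have h1y : 1 - y = Real.exp (-a * t) / (1 + Real.exp (-a * t)) := by
      rw [hy]; field_simp; ring
    have hratio : y / (1 - y) = Real.exp (a * t) := by
      rw [h1y, hy]
      rw [div_div_div_eq]
      rw [eq_comm, eq_div_iff (by positivity)]
      have hmul : Real.exp (a * t) * Real.exp (-a * t) = 1 := by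
        rw [← Real.exp_add, show a * t + -a * t = 0 by ring, Real.exp_zero]
      nlinarith [hmul]
    rw [hh, hratio, Real.log_exp]
    field_simp
  · -- conjugacy
    intro y hy
    obtain ⟨hy0, hy1⟩ := hy
    have hyne : y ≠ 0 := ne_of_gt hy0
    have h1y : (0:ℝ) < 1 - y := by linarith
    -- exp(-a * h y) = (1-y)/y
    have hex : Real.exp (-a * h y) = (1 - y) / y := by
      rw [show -a * h y = -(a * h y) by ring, Real.exp_neg, key y ⟨hy0, hy1⟩,
        inv_div]
    have hFy : F (h y) = h y + b - y := by
      rw [hF, hex]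
      have : (1 - y) / y + 1 = 1 / y := by field_simp; ring
      rw [this]
      field_simp
    -- fMW y values
    have hD : 0 < y + (1 - y) * Real.exp (a * (y - b)) := by
      have := Real.exp_pos (a * (y - b)); nlinarith
    have hfm := hfMW y
    have hratio : fMW y / (1 - fMW y)
        = (y / (1 - y)) * Real.exp (-(a * (y - b))) := by
      rw [hfm]
      have h1f : 1 - y / (y + (1 - y) * Real.exp (a * (y - b)))
          = (1 - y) * Real.exp (a * (y - b)) / (y + (1 - y) * Real.exp (a * (y - b))) := by
        field_simp
        ring
      rw [h1f, Real.exp_neg]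
      rw [div_div_div_eq]
      have hE := Real.exp_pos (a * (y - b))
      field_simp
    rw [hFy, hh (fMW y), hratio, Real.log_mul (by positivity) (ne_of_gt (Real.exp_pos _)),
      Real.log_exp, hh y]
    field_simp
    ring
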